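/- arXiv:1111.4707 — 9 statements merged into one kernel-verified Lean document; each statement's English description precedes it below -/
import Mathlib

section
/- Let R be a commutative ring, S a commutative R-algebra, a ∈ R, and write σ = algebraMap R S a for the image of a in S. Let 0 → E →g F →h E → 0 be a short exact sequence of S-modules (g injective S-linear, h surjective S-linear, range g = ker h). Suppose l ∈ ℕ is such that σ^l • x = 0 for every x ∈ E, while there exists y ∈ F with σ^(l+1) • y ≠ 0. Then, regarding E and F as R-modules by restriction of scalars along R → S, the sequence does not split over R: there is no R-linear map s : E → F with h ∘ s = id on E. -/
/-- Corollary 2.5 (push-forward of jet), algebraic form: a short exact sequence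
`0 → E → F → E → 0` of `S`-modules such that `σ^l = (algebraMap R S a)^l` kills `E`
while `σ^(l+1)` does not kill `F` does not split over `R` (restriction of scalars). -/
theorem stmt_1 {R S : Type*} [CommRing R] [CommRing S] [Algebra R S] (a : R)
    {E F : Type*} [AddCommGroup E] [AddCommGroup F]
    [Module S E] [Module S F] [Module R E] [Module R F]
    [IsScalarTower R S E] [IsScalarTower R S F]
    (g : E →ₗ[S] F) (h : F →ₗ[S] E)
    (hg : Function.Injective g) (hh : Function.Surjective h)
    (hexact : LinearMap.range g = LinearMap.ker h)
    (l : ℕ)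
    (hE : ∀ x : E, (algebraMap R S a) ^ l • x = 0)
    (hF : ∃ y : F, (algebraMap R S a) ^ (l + 1) • y ≠ 0) :
    ¬ ∃ s : E →ₗ[R] F, ∀ x : E, h (s x) = x := by
  rintro ⟨s, hs⟩
  obtain ⟨y, hy⟩ := hF
  apply hy
  -- decompose y = s (h y) + g e
  have hker : y - s (h y) ∈ LinearMap.ker h := by
    simp [LinearMap.mem_ker, hs]
  rw [← hexact] at hker
  obtain ⟨e, he⟩ := hker
  have hdecomp : y = s (h y) + g e := by rw [he]; abel
  have hE' : ∀ x : E, (a ^ l) • x = 0 := fun x => by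
    rw [← algebraMap_smul S, map_pow]; exact hE x
  have h1 : (algebraMap R S a) ^ (l + 1) • s (h y) = 0 := by
    rw [← map_pow, algebraMap_smul, ← map_smul, pow_succ', mul_smul,
      show (a ^ l) • h y = 0 from hE' _, smul_zero, map_zero]
  -- σ^(l+1) kills g e
  have h2 : (algebraMap R S a) ^ (l + 1) • g e = 0 := by
    rw [← map_smul, pow_succ, mul_smul, hE, map_zero]
  rw [hdecomp, smul_add, h1, h2, add_zero]
end

section
/- Let K be a field and B a discrete valuation ring that is a commutative K-algebra, with uniformizer u (i.e. u is an irreducible element of B). Let n ≥ 1 and l ≥ 0 be natural numbers. Then for every polynomial h ∈ K[X]: the evaluation of h at u^n (i.e. aeval (u^n) h ∈ B) lies in the ideal of B generated by u^(n·l) if and only if h lies in the ideal of K[X] generated by X^l. -/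
open Polynomial

/-- Identification of the polynomials in `u^n` lying in `(u^(n·l))` in a DVR `B`
with uniformizer `u` (proof of Lemma 2.7): `h(u^n) ∈ (u^(n·l))` iff `h ∈ (X^l)`. -/
theorem stmt_5 {K B : Type*} [Field K] [CommRing B] [IsDomain B]
    [IsDiscreteValuationRing B] [Algebra K B]
    (u : B) (hu : Irreducible u) (n l : ℕ) (hn : 1 ≤ n) :
    ∀ h : K[X],
      aeval (u ^ n) h ∈ Ideal.span {u ^ (n * l)} ↔ h ∈ Ideal.span {(X : K[X]) ^ l} := by
  intro h
  rw [Ideal.mem_span_singleton, Ideal.mem_span_singleton]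
  constructor
  · intro hmem
    induction l generalizing h with
    | zero => simp
    | succ l ih =>
      -- u divides aeval (u^n) h
      have hne : n * (l + 1) ≠ 0 := by positivity
      have hu1 : u ∣ aeval (u ^ n) h := (dvd_pow_self u hne).trans hmem
      -- decompose h
      have hdec : X * divX h + C (h.coeff 0) = h := X_mul_divX_add h
      have haev : aeval (u ^ n) h
          = u ^ n * aeval (u ^ n) (divX h) + algebraMap K B (h.coeff 0) := by
        conv_lhs => rw [← hdec]
        rw [map_add, map_mul, aeval_X, aeval_C]
      have hc0 : h.coeff 0 = 0 := by
        by_contra hc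
        have hunit : IsUnit (algebraMap K B (h.coeff 0)) :=
          (isUnit_iff_ne_zero.2 hc).map (algebraMap K B)
        have hdvd2 : u ∣ algebraMap K B (h.coeff 0) := by
          have : u ∣ u ^ n * aeval (u ^ n) (divX h) :=
            Dvd.dvd.mul_right (dvd_pow_self u (by omega)) _
          have := (dvd_add_right this).mp (haev ▸ hu1)
          exact this
        exact hu.not_isUnit (isUnit_of_dvd_unit hdvd2 hunit)
      obtain ⟨g, rfl⟩ : X ∣ h := X_dvd_iff.2 hc0
      have haev2 : aeval (u ^ n) (X * g) = u ^ n * aeval (u ^ n) g := by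
        rw [map_mul, aeval_X]
      have hcancel : u ^ (n * l) ∣ aeval (u ^ n) g := by
        have h0 : (u : B) ≠ 0 := hu.ne_zero
        have : u ^ n * u ^ (n * l) ∣ u ^ n * aeval (u ^ n) g := by
          rw [← pow_add, ← haev2]
          have he : n * (l + 1) = n + n * l := by ring
          rwa [he] at hmem
        exact (mul_dvd_mul_iff_left (pow_ne_zero n h0)).mp this
      have := ih _ hcancel
      calc X ^ (l + 1) = X * X ^ l := by ring
        _ ∣ X * g := mul_dvd_mul_left X this
  · rintro ⟨g, rfl⟩
    refine ⟨aeval (u ^ n) g, ?_⟩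
    simp [mul_comm, pow_mul]
end

section
/- Let K be a field, A and B commutative K-algebras with B a discrete valuation ring with uniformizer u, and let φ : A → B be a K-algebra homomorphism. Suppose f ∈ A and n ≥ 1 satisfy φ(f) = u^n. For l ≥ 1, let F be the B-module B ⧸ (u^(n·l)) regarded as an A-module via φ. Then the images of 1, f, …, f^(l−1) in A ⧸ Ann_A(F) are linearly independent over K, where Ann_A(F) = {a ∈ A : a • z = 0 for all z ∈ F}; in particular the K-dimension of A ⧸ Ann_A(F) is at least l. -/
/-- Algebraic form of Lemma 2.7: for a `K`-algebra map `φ : A → B` to a DVR `B` with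
uniformizer `u` and `φ f = u^n`, the module `F = B ⧸ (u^(n·l))`, viewed as an
`A`-module via `φ`, has the images of `1, f, …, f^(l-1)` linearly independent over `K`
in `A ⧸ Ann_A(F)`; in particular `dim_K (A ⧸ Ann_A(F)) ≥ l`. -/
theorem stmt_6 {K A B : Type*} [Field K] [CommRing A] [Algebra K A]
    [CommRing B] [IsDomain B] [IsDiscreteValuationRing B] [Algebra K B]
    (u : B) (hu : Irreducible u)
    (φ : A →ₐ[K] B) (f : A) (n : ℕ) (hn : 1 ≤ n) (hf : φ f = u ^ n)
    (l : ℕ) (hl : 1 ≤ l)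
    (I : Ideal A)
    (hI : ∀ a : A, a ∈ I ↔
      ∀ z : B ⧸ Ideal.span {u ^ (n * l)}, φ a • z = 0) :
    LinearIndependent K (fun i : Fin l => Ideal.Quotient.mk I (f ^ (i : ℕ))) ∧
      (l : Cardinal) ≤ Module.rank K (A ⧸ I) := by
  classical
  have hmain : LinearIndependent K
      (fun i : Fin l => Ideal.Quotient.mk I (f ^ (i : ℕ))) := by
    rw [Fintype.linearIndependent_iff]
    intro c hc
    by_contra h
    push_neg at h
    obtain ⟨j, hj⟩ := h
    set T : Finset (Fin l) := Finset.univ.filter (fun i => c i ≠ 0) with hT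
    have hTne : T.Nonempty := ⟨j, by simp [hT, hj]⟩
    set i₀ := T.min' hTne with hi₀def
    have hi₀T : i₀ ∈ T := T.min'_mem hTne
    have hci₀ : c i₀ ≠ 0 := by simpa [hT] using hi₀T
    -- the combination lies in I
    have hg : (∑ i, c i • f ^ (i : ℕ)) ∈ I := by
      rw [← Ideal.Quotient.eq_zero_iff_mem, ← Ideal.Quotient.mkₐ_eq_mk K, map_sum]
      simpa [Ideal.Quotient.mkₐ_eq_mk] using hc
    -- hence its image under φ is divisible by u^(n*l)
    have hdvd : u ^ (n * l) ∣ φ (∑ i, c i • f ^ (i : ℕ)) := by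
      rw [← Ideal.mem_span_singleton]
      have h1 := (hI _).mp hg (Ideal.Quotient.mk _ 1)
      rw [← Ideal.Quotient.eq_zero_iff_mem]
      simpa [Algebra.smul_def] using h1
    set b : Fin l → B := fun i => algebraMap K B (c i) with hb
    have hφg : φ (∑ i, c i • f ^ (i : ℕ)) = ∑ i ∈ T, b i * u ^ (n * (i : ℕ)) := by
      rw [map_sum]
      rw [← Finset.sum_subset (T.subset_univ) (by
        intro i _ hiT
        have : c i = 0 := by
          by_contra hci; exact hiT (by simp [hT, hci])
        simp [hb, this])]
      refine Finset.sum_congr rfl fun i _ => ?_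
      simp [Algebra.smul_def, map_pow, hf, ← pow_mul, hb, mul_comm n]
    set t : B := ∑ i ∈ T, b i * u ^ (n * ((i : ℕ) - (i₀ : ℕ))) with ht
    have hfac : ∑ i ∈ T, b i * u ^ (n * (i : ℕ)) = u ^ (n * (i₀ : ℕ)) * t := by
      rw [ht, Finset.mul_sum]
      refine Finset.sum_congr rfl fun i hi => ?_
      have hle : (i₀ : ℕ) ≤ (i : ℕ) := T.min'_le i hi
      have hsplit : n * (i : ℕ) = n * (i₀ : ℕ) + n * ((i : ℕ) - (i₀ : ℕ)) := by
        rw [← Nat.mul_add, Nat.add_sub_cancel' hle]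
      rw [hsplit, pow_add]; ring
    -- the "tail" of t is divisible by u
    have hrest : u ∣ ∑ i ∈ T.erase i₀, b i * u ^ (n * ((i : ℕ) - (i₀ : ℕ))) := by
      refine Finset.dvd_sum fun i hi => ?_
      have hiT : i ∈ T := Finset.mem_of_mem_erase hi
      have hne : i ≠ i₀ := Finset.ne_of_mem_erase hi
      have hlt : (i₀ : ℕ) < (i : ℕ) := by
        have hle : (i₀ : ℕ) ≤ (i : ℕ) := T.min'_le i hiT
        rcases lt_or_eq_of_le hle with h | h
        · exact h
        · exact absurd (Fin.ext h.symm) hne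
      have hpos : n * ((i : ℕ) - (i₀ : ℕ)) ≠ 0 := by
        have : 1 ≤ (i : ℕ) - (i₀ : ℕ) := by omega
        positivity
      exact Dvd.dvd.mul_left (dvd_pow_self u hpos) (b i)
    have htsum : t = b i₀ + ∑ i ∈ T.erase i₀, b i * u ^ (n * ((i : ℕ) - (i₀ : ℕ))) := by
      rw [ht, ← Finset.add_sum_erase T _ hi₀T]
      simp
    -- divisibility forces u ∣ t
    have hle2 : n * (i₀ : ℕ) + 1 ≤ n * l := by
      calc n * (i₀ : ℕ) + 1 ≤ n * (i₀ : ℕ) + n := by omega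
        _ = n * ((i₀ : ℕ) + 1) := by ring
        _ ≤ n * l := Nat.mul_le_mul_left n i₀.isLt
    have hmid : u ^ (n * (i₀ : ℕ)) * u ∣ u ^ (n * (i₀ : ℕ)) * t := by
      rw [← pow_succ]
      calc u ^ (n * (i₀ : ℕ) + 1) ∣ u ^ (n * l) := pow_dvd_pow u hle2
        _ ∣ u ^ (n * (i₀ : ℕ)) * t := by rw [← hfac, ← hφg]; exact hdvd
    have hut : u ∣ t := (mul_dvd_mul_iff_left (pow_ne_zero _ hu.ne_zero)).mp hmid
    have hub : u ∣ b i₀ := by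
      have : b i₀ = t - ∑ i ∈ T.erase i₀, b i * u ^ (n * ((i : ℕ) - (i₀ : ℕ))) := by
        rw [htsum]; ring
      rw [this]
      exact dvd_sub hut hrest
    have hbunit : IsUnit (b i₀) := (hci₀.isUnit).map (algebraMap K B)
    exact hu.not_isUnit (isUnit_of_dvd_unit hub hbunit)
  refine ⟨hmain, ?_⟩
  have := hmain.cardinal_lift_le_rank
  simpa using this
end

section
/- In the polynomial ring ℂ[x,y] in two variables over ℂ, for every natural number r ≥ 1, the element y^r − r·x·y^(r−1) lies in the ideal generated by (x − y)^r and x². -/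
open MvPolynomial

lemma stmt_8_aux (m : ℕ) :
    ∃ q : MvPolynomial (Fin 2) ℂ,
      (X 1 : MvPolynomial (Fin 2) ℂ) ^ (m + 1)
          - ((m + 1 : ℕ) : MvPolynomial (Fin 2) ℂ) * X 0 * X 1 ^ m =
        (-1) ^ (m + 1) * (X 0 - X 1) ^ (m + 1) + X 0 ^ 2 * q := by
  induction m with
  | zero => exact ⟨0, by push_cast; ring⟩
  | succ m ih =>
    obtain ⟨q, hq⟩ := ih
    refine ⟨(X 1 - X 0) * q - ((m + 1 : ℕ) : MvPolynomial (Fin 2) ℂ) * X 1 ^ m, ?_⟩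
    push_cast at hq ⊢
    linear_combination (X 1 - X 0 : MvPolynomial (Fin 2) ℂ) * hq

/-- Key binomial computation in Step (a) of the proof of Proposition 2.1: in `ℂ[x,y]`,
`y^r − r·x·y^(r−1) ∈ ((x−y)^r, x²)`. -/
theorem stmt_8 (r : ℕ) (hr : 1 ≤ r) :
    (X 1 : MvPolynomial (Fin 2) ℂ) ^ r
        - (r : MvPolynomial (Fin 2) ℂ) * X 0 * X 1 ^ (r - 1) ∈
      Ideal.span {((X 0 : MvPolynomial (Fin 2) ℂ) - X 1) ^ r,
        (X 0 : MvPolynomial (Fin 2) ℂ) ^ 2} := by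
  obtain ⟨m, rfl⟩ : ∃ m, r = m + 1 := ⟨r - 1, (Nat.succ_pred_eq_of_pos hr).symm⟩
  obtain ⟨q, hq⟩ := stmt_8_aux m
  rw [Ideal.mem_span_pair]
  exact ⟨(-1) ^ (m + 1), q, by push_cast at hq ⊢; linear_combination -hq⟩
end

section
/- In the polynomial ring ℂ[x,y] in two variables over ℂ, let r ≥ 1 and l ∈ ℕ. Then y^l lies in the ideal generated by (x − y)^r and x² if and only if l ≥ r + 1. -/
open MvPolynomial

/-- Step (a) of the proof of Proposition 2.1: in `ℂ[x,y]`,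
`y^l ∈ ((x−y)^r, x²)` iff `l ≥ r + 1`. -/
theorem stmt_9 (r l : ℕ) (hr : 1 ≤ r) :
    (X 1 : MvPolynomial (Fin 2) ℂ) ^ l ∈
        Ideal.span {((X 0 : MvPolynomial (Fin 2) ℂ) - X 1) ^ r,
          (X 0 : MvPolynomial (Fin 2) ℂ) ^ 2}
      ↔ r + 1 ≤ l := by
  constructor
  · -- hard direction
    intro h
    set z : DualNumber (Polynomial ℂ) :=
      DualNumber.eps - TrivSqZeroExt.inl Polynomial.X with hz
    set v : Fin 2 → DualNumber (Polynomial ℂ) := ![DualNumber.eps, z] with hv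
    set φ := (MvPolynomial.aeval v :
        MvPolynomial (Fin 2) ℂ →ₐ[ℂ] DualNumber (Polynomial ℂ)) with hφ
    obtain ⟨a, b, hab⟩ := Ideal.mem_span_pair.mp h
    have h0 : φ (X 0) = DualNumber.eps := by simp [hφ, hv]
    have h1 : φ (X 1) = z := by simp [hφ, hv]
    have this1 := congrArg φ hab
    simp only [map_add, map_mul, map_pow, map_sub, h0, h1] at this1
    have heq : φ a * TrivSqZeroExt.inl (Polynomial.X ^ r) = z ^ l := by
      rw [← this1, hz, sub_sub_cancel, TrivSqZeroExt.inl_pow, sq, DualNumber.eps_mul_eps,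
        mul_zero, add_zero]
    have hzf : z.fst = -Polynomial.X := by
      rw [hz, TrivSqZeroExt.fst_sub, DualNumber.fst_eps, TrivSqZeroExt.fst_inl, zero_sub]
    have hzs : z.snd = 1 := by
      rw [hz, TrivSqZeroExt.snd_sub, DualNumber.snd_eps, TrivSqZeroExt.snd_inl, sub_zero]
    have hfst : Polynomial.X ^ r ∣ (z ^ l).fst := by
      refine ⟨(φ a).fst, ?_⟩
      rw [← heq, TrivSqZeroExt.fst_mul, TrivSqZeroExt.fst_inl, mul_comm]
    have hsnd : Polynomial.X ^ r ∣ (z ^ l).snd := by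
      refine ⟨(φ a).snd, ?_⟩
      rw [← heq, TrivSqZeroExt.snd_mul, TrivSqZeroExt.snd_inl, TrivSqZeroExt.fst_inl]
      simp [mul_comm]
    rw [TrivSqZeroExt.fst_pow, hzf] at hfst
    rw [TrivSqZeroExt.snd_pow, hzf, hzs, smul_eq_mul, mul_one, nsmul_eq_mul] at hsnd
    have hXne : (Polynomial.X : Polynomial ℂ) ≠ 0 := Polynomial.X_ne_zero
    have hXnu : ¬ IsUnit (Polynomial.X : Polynomial ℂ) := Polynomial.not_isUnit_X
    have hu : ∀ k : ℕ, IsUnit ((-1 : Polynomial ℂ) ^ k) := fun k => (isUnit_one.neg).pow k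
    have hrl : r ≤ l := by
      rw [neg_pow] at hfst
      exact (pow_dvd_pow_iff hXne hXnu).mp ((hu l).dvd_mul_left.mp hfst)
    have hlne : l ≠ 0 := by
      rintro rfl
      rw [pow_zero] at hfst
      exact hXnu (isUnit_of_dvd_one (dvd_trans (dvd_pow_self _ (by omega : r ≠ 0)) hfst))
    have hrl1 : r ≤ l - 1 := by
      rw [neg_pow, ← mul_assoc] at hsnd
      have hul : IsUnit ((l : Polynomial ℂ)) := by
        rw [← Polynomial.C_eq_natCast]
        have hlc : (l : ℂ) ≠ 0 := Nat.cast_ne_zero.mpr hlne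
        exact Polynomial.isUnit_C.mpr hlc.isUnit
      exact (pow_dvd_pow_iff hXne hXnu).mp
        ((hul.mul (hu (Nat.pred l))).dvd_mul_left.mp hsnd)
    omega
  · -- easy direction
    intro hl
    have key : (X 1 : MvPolynomial (Fin 2) ℂ) ^ (r + 1) ∈
        Ideal.span {((X 0 : MvPolynomial (Fin 2) ℂ) - X 1) ^ r,
          (X 0 : MvPolynomial (Fin 2) ℂ) ^ 2} := by
      have expand : (X 1 : MvPolynomial (Fin 2) ℂ) ^ (r + 1) =
          ∑ m ∈ Finset.range (r + 1 + 1),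
            X 0 ^ m * (X 1 - X 0) ^ (r + 1 - m) * ((r+1).choose m : MvPolynomial (Fin 2) ℂ) := by
        rw [← add_pow]
        ring_nf
      rw [expand]
      refine Ideal.sum_mem _ fun m hm => ?_
      by_cases h2 : 2 ≤ m
      · obtain ⟨c, hc⟩ : (X 0 : MvPolynomial (Fin 2) ℂ) ^ 2 ∣
            X 0 ^ m * (X 1 - X 0) ^ (r + 1 - m) * ((r+1).choose m : MvPolynomial (Fin 2) ℂ) :=
          ((pow_dvd_pow _ h2).mul_right _).mul_right _
        rw [hc]
        exact Ideal.mul_mem_right _ _ (Ideal.subset_span (Or.inr rfl))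
      · have hexp : r + 1 - m = r + (1 - m) := by omega
        have hdvd : ((X 0 : MvPolynomial (Fin 2) ℂ) - X 1) ^ r ∣ (X 1 - X 0) ^ (r + 1 - m) := by
          refine ⟨(-1 : MvPolynomial (Fin 2) ℂ) ^ (r + 1 - m) * (X 0 - X 1) ^ (1 - m), ?_⟩
          have hneg : (X 1 - X 0 : MvPolynomial (Fin 2) ℂ) = -(X 0 - X 1) := by ring
          rw [hneg, neg_pow, ← mul_assoc, mul_comm (((X 0 : MvPolynomial (Fin 2) ℂ) - X 1) ^ r),
            mul_assoc, ← pow_add, ← hexp]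
        obtain ⟨c, hc⟩ : ((X 0 : MvPolynomial (Fin 2) ℂ) - X 1) ^ r ∣
            X 0 ^ m * (X 1 - X 0) ^ (r + 1 - m) * ((r+1).choose m : MvPolynomial (Fin 2) ℂ) :=
          (hdvd.mul_left _).mul_right _
        rw [hc]
        exact Ideal.mul_mem_right _ _ (Ideal.subset_span (Or.inl rfl))
    rw [show l = (l - (r+1)) + (r+1) by omega, pow_add]
    exact Ideal.mul_mem_left _ _ key
end

section
/- Let r ≥ 1, let A = ℂ[x,y] be the polynomial ring in two variables over ℂ, let I be the ideal generated by (x−y)^r and x, and let J be the ideal generated by (x−y)^r and x² (so J ⊆ I). Then: (i) multiplication by x induces a well-defined A-linear map μ : A/I → A/J sending the class of a to the class of x·a; (ii) μ is injective; and (iii) the range of μ equals the kernel of the natural projection q : A/J → A/I. In other words, 0 → A/I →μ A/J →q A/I → 0 is a short exact sequence of A-modules. -/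
open MvPolynomial

/-- Step (a) of the proof of Proposition 2.1: with `A = ℂ[x,y]`,
`I = ((x−y)^r, x)` and `J = ((x−y)^r, x²)`, multiplication by `x` induces a
well-defined injective `A`-linear map `μ : A/I → A/J` whose range is the kernel of
the natural projection `q : A/J → A/I`; i.e. `0 → A/I → A/J → A/I → 0` is exact. -/
theorem stmt_10 (r : ℕ) (hr : 1 ≤ r)
    (I J : Ideal (MvPolynomial (Fin 2) ℂ))
    (hIdef : I = Ideal.span {((X 0 : MvPolynomial (Fin 2) ℂ) - X 1) ^ r,
      (X 0 : MvPolynomial (Fin 2) ℂ)})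
    (hJdef : J = Ideal.span {((X 0 : MvPolynomial (Fin 2) ℂ) - X 1) ^ r,
      (X 0 : MvPolynomial (Fin 2) ℂ) ^ 2}) :
    J ≤ I ∧
    ∃ (μ : (MvPolynomial (Fin 2) ℂ ⧸ I) →ₗ[MvPolynomial (Fin 2) ℂ]
            (MvPolynomial (Fin 2) ℂ ⧸ J))
      (q : (MvPolynomial (Fin 2) ℂ ⧸ J) →ₗ[MvPolynomial (Fin 2) ℂ]
            (MvPolynomial (Fin 2) ℂ ⧸ I)),
      (∀ a : MvPolynomial (Fin 2) ℂ,
          μ (Ideal.Quotient.mk I a) = Ideal.Quotient.mk J (X 0 * a)) ∧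
      (∀ a : MvPolynomial (Fin 2) ℂ,
          q (Ideal.Quotient.mk J a) = Ideal.Quotient.mk I a) ∧
      Function.Injective μ ∧
      LinearMap.range μ = LinearMap.ker q := by
  set A := MvPolynomial (Fin 2) ℂ with hA
  have hgI1 : ((X 0 : A) - X 1) ^ r ∈ I := by
    rw [hIdef]; exact Ideal.subset_span (Set.mem_insert _ _)
  have hgI2 : (X 0 : A) ∈ I := by
    rw [hIdef]; exact Ideal.subset_span (Set.mem_insert_of_mem _ rfl)
  have hgJ1 : ((X 0 : A) - X 1) ^ r ∈ J := by
    rw [hJdef]; exact Ideal.subset_span (Set.mem_insert _ _)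
  have hgJ2 : (X 0 : A) ^ 2 ∈ J := by
    rw [hJdef]; exact Ideal.subset_span (Set.mem_insert_of_mem _ rfl)
  have hJI : J ≤ I := by
    rw [hJdef, Ideal.span_le]
    rintro p (rfl | rfl)
    · exact hgI1
    · rw [pow_two]; exact Ideal.mul_mem_left _ _ hgI2
  -- multiplication by X 0 maps I into J
  have hmul : ∀ a ∈ I, (X 0 : A) * a ∈ J := by
    intro a ha
    rw [hIdef, Ideal.mem_span_pair] at ha
    obtain ⟨u, v, huv⟩ := ha
    have : (X 0 : A) * a = (X 0 * u) * ((X 0 : A) - X 1) ^ r + v * (X 0 : A) ^ 2 := by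
      rw [← huv]; ring
    rw [this]
    exact add_mem (Ideal.mul_mem_left _ _ hgJ1) (Ideal.mul_mem_left _ _ hgJ2)
  -- X 0 is prime and does not divide X 0 - X 1
  have hnd : ¬ (X 0 : A) ∣ ((X 0 : A) - X 1) := by
    rintro ⟨c, hc⟩
    have := congrArg (eval (fun i : Fin 2 => if i = 0 then (0:ℂ) else 1)) hc
    simp at this
  have hX0 : Prime (X 0 : A) := by
    rw [← MulEquiv.prime_iff (finSuccEquiv ℂ 1).toRingEquiv.toMulEquiv]
    show Prime (finSuccEquiv ℂ 1 (X 0))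
    rw [finSuccEquiv_X_zero]
    exact Polynomial.prime_X
  -- injectivity key: X 0 * a ∈ J → a ∈ I
  have hinj : ∀ a : A, (X 0 : A) * a ∈ J → a ∈ I := by
    intro a ha
    rw [hJdef, Ideal.mem_span_pair] at ha
    obtain ⟨u, v, huv⟩ := ha
    have hdvd : (X 0 : A) ∣ u * ((X 0 : A) - X 1) ^ r := by
      refine ⟨a - v * X 0, ?_⟩
      linear_combination huv
    have hu : (X 0 : A) ∣ u := by
      rcases hX0.dvd_mul.mp hdvd with h | h
      · exact h
      · exact absurd (hX0.dvd_of_dvd_pow h) hnd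
    obtain ⟨u', rfl⟩ := hu
    have hcan : (X 0 : A) * a = X 0 * (u' * ((X 0 : A) - X 1) ^ r + v * X 0) := by
      linear_combination -huv
    have hfin := mul_left_cancel₀ (MvPolynomial.X_ne_zero 0) hcan
    rw [hIdef, Ideal.mem_span_pair]
    exact ⟨u', v, hfin.symm⟩
  have hcond : I ≤ Submodule.comap ((X 0 : A) • (LinearMap.id : A →ₗ[A] A)) J := by
    intro a ha
    simpa using hmul a ha
  set μ : (A ⧸ I) →ₗ[A] (A ⧸ J) := Submodule.mapQ I J _ hcond with hμdef
  set q : (A ⧸ J) →ₗ[A] (A ⧸ I) :=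
    Submodule.mapQ J I LinearMap.id (fun a ha => hJI ha) with hqdef
  have hμ : ∀ a : A, μ (Ideal.Quotient.mk I a) = Ideal.Quotient.mk J (X 0 * a) := by
    intro a
    rw [hμdef, show Ideal.Quotient.mk I a = Submodule.Quotient.mk a from rfl,
      Submodule.mapQ_apply]
    rfl
  have hq : ∀ a : A, q (Ideal.Quotient.mk J a) = Ideal.Quotient.mk I a := by
    intro a
    rw [hqdef, show Ideal.Quotient.mk J a = Submodule.Quotient.mk a from rfl,
      Submodule.mapQ_apply]
    rfl
  refine ⟨hJI, μ, q, hμ, hq, ?_, ?_⟩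
  · rw [← LinearMap.ker_eq_bot, LinearMap.ker_eq_bot']
    intro x hx
    obtain ⟨a, rfl⟩ := Ideal.Quotient.mk_surjective x
    rw [hμ] at hx
    exact Ideal.Quotient.eq_zero_iff_mem.mpr
      (hinj a (Ideal.Quotient.eq_zero_iff_mem.mp hx))
  · ext x
    obtain ⟨a, rfl⟩ := Ideal.Quotient.mk_surjective x
    constructor
    · rintro ⟨b, hb⟩
      obtain ⟨c, rfl⟩ := Ideal.Quotient.mk_surjective b
      rw [LinearMap.mem_ker, ← hb, hμ c, hq]
      exact Ideal.Quotient.eq_zero_iff_mem.mpr (Ideal.mul_mem_right _ _ hgI2)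
    · intro hx
      rw [LinearMap.mem_ker, hq] at hx
      have haI : a ∈ I := Ideal.Quotient.eq_zero_iff_mem.mp hx
      rw [hIdef, Ideal.mem_span_pair] at haI
      obtain ⟨u, v, huv⟩ := haI
      refine ⟨Ideal.Quotient.mk I v, ?_⟩
      rw [hμ, Ideal.Quotient.mk_eq_mk_iff_sub_mem]
      have : (X 0 : A) * v - a = -u * ((X 0 : A) - X 1) ^ r := by linear_combination huv
      rw [this]
      exact Ideal.mul_mem_left _ _ hgJ1
end

section
/- Let r ≥ 1 and n ≥ 1 be natural numbers with n dividing r. Let A = ℂ[x,y] be the polynomial ring in two variables over ℂ, I the ideal generated by (x−y)^r and x, J the ideal generated by (x−y)^r and x², and q : A/J → A/I the natural projection (well-defined since J ⊆ I). Regard A/I and A/J as modules over the one-variable polynomial ring ℂ[s] via the ℂ-algebra homomorphism ℂ[s] → ℂ[x,y] sending s to y^n. Then q admits no ℂ[s]-linear section: there is no ℂ[s]-linear map σ : A/I → A/J with q ∘ σ = id on A/I. -/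
open MvPolynomial

private theorem keylem_stmt11 (r : ℕ) (hr : 1 ≤ r) :
    (X 1 : MvPolynomial (Fin 2) ℂ) ^ r ∉ Ideal.span {((X 0 : MvPolynomial (Fin 2) ℂ) - X 1) ^ r,
      (X 0 : MvPolynomial (Fin 2) ℂ) ^ 2} := by
  intro hmem
  obtain ⟨m, rfl⟩ : ∃ m, r = m + 1 := ⟨r - 1, (Nat.succ_pred_eq_of_pos hr).symm⟩
  rw [Ideal.mem_span_pair] at hmem
  obtain ⟨a, b, hab⟩ := hmem
  have E := congrArg (MvPolynomial.aeval (R := ℂ)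
    ((![Polynomial.X, Polynomial.C Polynomial.X] : Fin 2 → Polynomial (Polynomial ℂ)))) hab
  simp only [map_add, map_mul, map_pow, map_sub, aeval_X,
    Matrix.cons_val_zero, Matrix.cons_val_one, Matrix.head_cons] at E
  set A := (MvPolynomial.aeval (R := ℂ)
    ((![Polynomial.X, Polynomial.C Polynomial.X] : Fin 2 → Polynomial (Polynomial ℂ)))) a with hA
  set B := (MvPolynomial.aeval (R := ℂ)
    ((![Polynomial.X, Polynomial.C Polynomial.X] : Fin 2 → Polynomial (Polynomial ℂ)))) b with hB
  have E1 := congrArg (Polynomial.eval 0) E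
  have E2 := congrArg (fun p => Polynomial.eval 0 (Polynomial.derivative p)) E
  simp only [Polynomial.eval_add, Polynomial.eval_mul, Polynomial.eval_pow, Polynomial.eval_sub,
    Polynomial.eval_X, Polynomial.eval_C, zero_sub, Polynomial.derivative_mul,
    Polynomial.derivative_add,
    Polynomial.derivative_pow, Polynomial.derivative_sub, Polynomial.derivative_X,
    Polynomial.derivative_C, sub_zero, mul_one, Polynomial.derivative_X_pow,
    Nat.add_sub_cancel, Polynomial.eval_natCast, Polynomial.eval_ofNat, zero_pow,
    mul_zero, zero_mul, add_zero, zero_add, Polynomial.derivative_one] at E1 E2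
  norm_num at E1 E2
  set a0 := Polynomial.eval 0 A with ha0
  set a1 := Polynomial.eval 0 (Polynomial.derivative A) with ha1
  have hnp : (-Polynomial.X : Polynomial ℂ) ^ (m + 1) =
      -(((-1 : Polynomial ℂ)) ^ m * Polynomial.X ^ m * Polynomial.X) := by
    rw [pow_succ, neg_pow]; ring
  have hnp2 : (-Polynomial.X : Polynomial ℂ) ^ m = ((-1 : Polynomial ℂ)) ^ m * Polynomial.X ^ m :=
    neg_pow _ _
  have hxp : (Polynomial.X : Polynomial ℂ) ^ (m + 1) = Polynomial.X ^ m * Polynomial.X :=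
    pow_succ _ _
  rw [hnp, hxp] at E1
  rw [hnp, hnp2] at E2
  generalize ((-1 : Polynomial ℂ) ^ m) = s at E1 E2
  have key : (((m : Polynomial ℂ) + 1) + a1 * s * Polynomial.X) *
      (Polynomial.X ^ m * Polynomial.X) = 0 := by
    linear_combination (-Polynomial.X) * E2 - ((m : Polynomial ℂ) + 1) * E1
  rcases mul_eq_zero.mp key with h | h
  · have h0 := congrArg (Polynomial.eval 0) h
    simp at h0
    norm_cast at h0
  · rw [← pow_succ] at h
    exact pow_ne_zero (m + 1) Polynomial.X_ne_zero h

private theorem aux_stmt11 (r n : ℕ) (hr : 1 ≤ r) (hn : 1 ≤ n) (hdvd : n ∣ r)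
    (I J : Ideal (MvPolynomial (Fin 2) ℂ))
    (hIdef : I = Ideal.span {((X 0 : MvPolynomial (Fin 2) ℂ) - X 1) ^ r,
      (X 0 : MvPolynomial (Fin 2) ℂ)})
    (hJdef : J = Ideal.span {((X 0 : MvPolynomial (Fin 2) ℂ) - X 1) ^ r,
      (X 0 : MvPolynomial (Fin 2) ℂ) ^ 2})
    (hJI : J ≤ I)
    [inst1 : Module (Polynomial ℂ) (MvPolynomial (Fin 2) ℂ ⧸ I)]
    [inst2 : Module (Polynomial ℂ) (MvPolynomial (Fin 2) ℂ ⧸ J)]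
    (h1 : ∀ (p : Polynomial ℂ) (g : MvPolynomial (Fin 2) ℂ),
      p • Ideal.Quotient.mk I g =
        Ideal.Quotient.mk I (Polynomial.aeval ((X 1 : MvPolynomial (Fin 2) ℂ) ^ n) p * g))
    (h2 : ∀ (p : Polynomial ℂ) (g : MvPolynomial (Fin 2) ℂ),
      p • Ideal.Quotient.mk J g =
        Ideal.Quotient.mk J (Polynomial.aeval ((X 1 : MvPolynomial (Fin 2) ℂ) ^ n) p * g)) :
    ¬ ∃ σ : (MvPolynomial (Fin 2) ℂ ⧸ I) →ₗ[Polynomial ℂ]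
              (MvPolynomial (Fin 2) ℂ ⧸ J),
        ∀ z : MvPolynomial (Fin 2) ℂ ⧸ I,
          Ideal.Quotient.factor (S := J) (T := I) hJI (σ z) = z := by
  rintro ⟨σ, hσ⟩
  obtain ⟨k, hk⟩ := hdvd
  set y : MvPolynomial (Fin 2) ℂ := X 1 with hy
  set x : MvPolynomial (Fin 2) ℂ := X 0 with hx
  have haev : Polynomial.aeval (R := ℂ) ((X 1 : MvPolynomial (Fin 2) ℂ) ^ n) (Polynomial.X ^ k)
      = y ^ r := by
    rw [map_pow, Polynomial.aeval_X, ← pow_mul, ← hk, hy]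
  -- x ∣ y^r - (y-x)^r
  obtain ⟨c, hc⟩ : x ∣ y ^ r - (y - x) ^ r := by
    have := sub_dvd_pow_sub_pow y (y - x) r
    simpa using this
  -- (y-x)^r ∈ J and ∈ I
  have hyx_mem_J : (y - x) ^ r ∈ J := by
    rw [hJdef]
    have : (y - x) ^ r = (-1) ^ r * (x - y) ^ r := by rw [← neg_pow]; ring_nf
    rw [this]
    exact Ideal.mul_mem_left _ _ (Ideal.subset_span (Set.mem_insert _ _))
  -- y^r ∈ I
  have hyI : y ^ r ∈ I := by
    have hx_mem : x ∈ I := by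
      rw [hIdef]; exact Ideal.subset_span (Set.mem_insert_of_mem _ rfl)
    have hyx_mem_I : (y - x) ^ r ∈ I := hJI hyx_mem_J
    have : y ^ r = x * c + (y - x) ^ r := by rw [← hc]; ring
    rw [this]
    exact I.add_mem (I.mul_mem_right _ hx_mem) hyx_mem_I
  -- x * y^r ∈ J
  have hxy_mem_J : x * y ^ r ∈ J := by
    have hx2_mem : x ^ 2 ∈ J := by
      rw [hJdef]; exact Ideal.subset_span (Set.mem_insert_of_mem _ rfl)
    have : x * y ^ r = x ^ 2 * c + x * (y - x) ^ r := by
      rw [pow_two, mul_assoc, ← hc]; ring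
    rw [this]
    exact J.add_mem (J.mul_mem_right _ hx2_mem) (J.mul_mem_left _ hyx_mem_J)
  -- pick a representative of σ (mk 1)
  obtain ⟨f, hf⟩ := Ideal.Quotient.mk_surjective (σ (Ideal.Quotient.mk I 1))
  -- section property: f - 1 ∈ I
  have hf1 : f - 1 ∈ I := by
    have := hσ (Ideal.Quotient.mk I 1)
    rw [← hf, Ideal.Quotient.factor_mk] at this
    exact (Ideal.Quotient.eq (I := I)).mp this
  -- smul kills mk I 1
  have e0 : (Polynomial.X ^ k : Polynomial ℂ) • Ideal.Quotient.mk I (1 : MvPolynomial (Fin 2) ℂ)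
      = 0 := by
    rw [h1, haev, mul_one, Ideal.Quotient.eq_zero_iff_mem]
    exact hyI
  -- hence y^r * f ∈ J
  have e3 : y ^ r * f ∈ J := by
    have : Ideal.Quotient.mk J (y ^ r * f) = 0 := by
      have hms := σ.map_smul (Polynomial.X ^ k) (Ideal.Quotient.mk I 1)
      rw [e0, map_zero, ← hf, h2, haev] at hms
      rw [← hms]
    exact (Ideal.Quotient.eq_zero_iff_mem).mp this
  -- y^r * (f - 1) ∈ J
  have e4 : y ^ r * (f - 1) ∈ J := by
    rw [hIdef, Ideal.mem_span_pair] at hf1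
    obtain ⟨a, b, hab⟩ := hf1
    have hg1_mem : ((X 0 : MvPolynomial (Fin 2) ℂ) - X 1) ^ r ∈ J := by
      rw [hJdef]; exact Ideal.subset_span (Set.mem_insert _ _)
    have : y ^ r * (f - 1) = (y ^ r * a) * ((X 0 : MvPolynomial (Fin 2) ℂ) - X 1) ^ r
        + b * (x * y ^ r) := by rw [← hab]; ring
    rw [this]
    exact J.add_mem (J.mul_mem_left _ hg1_mem) (J.mul_mem_left _ hxy_mem_J)
  -- conclude y^r ∈ J, contradiction
  have e5 : y ^ r ∈ J := by
    have : y ^ r = y ^ r * f - y ^ r * (f - 1) := by ring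
    rw [this]
    exact J.sub_mem e3 e4
  rw [hJdef] at e5
  exact keylem_stmt11 r hr e5

/-- Step (a) of Proposition 2.1 combined with Corollary 2.5: regarding
`A/I` and `A/J` (`A = ℂ[x,y]`, `I = ((x−y)^r, x)`, `J = ((x−y)^r, x²)`) as
`ℂ[s]`-modules via `s ↦ y^n` (where `n ∣ r`), the natural projection
`q : A/J → A/I` admits no `ℂ[s]`-linear section. -/
theorem stmt_11 (r n : ℕ) (hr : 1 ≤ r) (hn : 1 ≤ n) (hdvd : n ∣ r)
    (I J : Ideal (MvPolynomial (Fin 2) ℂ))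
    (hIdef : I = Ideal.span {((X 0 : MvPolynomial (Fin 2) ℂ) - X 1) ^ r,
      (X 0 : MvPolynomial (Fin 2) ℂ)})
    (hJdef : J = Ideal.span {((X 0 : MvPolynomial (Fin 2) ℂ) - X 1) ^ r,
      (X 0 : MvPolynomial (Fin 2) ℂ) ^ 2})
    (hJI : J ≤ I) :
    letI : Module (Polynomial ℂ) (MvPolynomial (Fin 2) ℂ ⧸ I) :=
      Module.compHom _
        (Polynomial.aeval ((X 1 : MvPolynomial (Fin 2) ℂ) ^ n)).toRingHom
    letI : Module (Polynomial ℂ) (MvPolynomial (Fin 2) ℂ ⧸ J) :=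
      Module.compHom _
        (Polynomial.aeval ((X 1 : MvPolynomial (Fin 2) ℂ) ^ n)).toRingHom
    ¬ ∃ σ : (MvPolynomial (Fin 2) ℂ ⧸ I) →ₗ[Polynomial ℂ]
              (MvPolynomial (Fin 2) ℂ ⧸ J),
        ∀ z : MvPolynomial (Fin 2) ℂ ⧸ I,
          Ideal.Quotient.factor (S := J) (T := I) hJI (σ z) = z := by
  refine aux_stmt11 r n hr hn hdvd I J hIdef hJdef hJI
    (inst1 := _) (inst2 := _) (fun p g => rfl) (fun p g => rfl)
end

section
/- Let r ≥ 1. The quotient ring M₂ = ℂ[x,y] ⧸ ((x−y)^r, x²), regarded as a module over the ring ℂ[ε] = ℂ[t]/(t²) of dual numbers via the ℂ-algebra homomorphism ℂ[t]/(t²) → M₂ sending the class of t to the class of x, is a free ℂ[ε]-module of rank r; indeed the images of 1, y, y², …, y^(r−1) form a ℂ[ε]-basis. -/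
open MvPolynomial

set_option synthInstance.maxHeartbeats 1000000
set_option maxHeartbeats 1600000

noncomputable section StepA

abbrev Rdual : Type := Polynomial ℂ ⧸ Ideal.span {(Polynomial.X : Polynomial ℂ) ^ 2}

noncomputable def eps : Rdual := Ideal.Quotient.mk _ Polynomial.X

instance : Nontrivial Rdual := by
  refine Ideal.Quotient.nontrivial_iff.mpr ?_
  rw [Ne, Ideal.span_singleton_eq_top]
  intro h
  have := Polynomial.natDegree_eq_zero_of_isUnit h
  simp at this

lemma eps_sq : eps ^ 2 = 0 := by
  rw [eps, ← map_pow, Ideal.Quotient.eq_zero_iff_mem]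
  exact Ideal.subset_span rfl

noncomputable def fpol (r : ℕ) : Polynomial Rdual := (Polynomial.X - Polynomial.C eps) ^ r

lemma fpol_monic (r : ℕ) : (fpol r).Monic := (Polynomial.monic_X_sub_C eps).pow r

lemma fpol_natDegree (r : ℕ) : (fpol r).natDegree = r := by
  rw [fpol, (Polynomial.monic_X_sub_C eps).natDegree_pow, Polynomial.natDegree_X_sub_C, mul_one]

end StepA

/-- Step (a) of Proposition 2.1: `M₂ = ℂ[x,y]/((x−y)^r, x²)`, as a module over the
dual numbers `ℂ[ε] = ℂ[t]/(t²)` via the `ℂ`-algebra map sending the class of `t` to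
the class of `x`, is free of rank `r` with basis the images of `1, y, …, y^(r−1)`. -/
theorem stmt_13 (r : ℕ) (hr : 1 ≤ r)
    (J : Ideal (MvPolynomial (Fin 2) ℂ))
    (hJdef : J = Ideal.span {((X 0 : MvPolynomial (Fin 2) ℂ) - X 1) ^ r,
      (X 0 : MvPolynomial (Fin 2) ℂ) ^ 2})
    (ψ : (Polynomial ℂ ⧸ Ideal.span {(Polynomial.X : Polynomial ℂ) ^ 2}) →ₐ[ℂ]
          (MvPolynomial (Fin 2) ℂ ⧸ J))
    (hψ : ψ (Ideal.Quotient.mk (Ideal.span {(Polynomial.X : Polynomial ℂ) ^ 2})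
            Polynomial.X)
          = Ideal.Quotient.mk J (X 0)) :
    letI : Module (Polynomial ℂ ⧸ Ideal.span {(Polynomial.X : Polynomial ℂ) ^ 2})
        (MvPolynomial (Fin 2) ℂ ⧸ J) :=
      Module.compHom _ ψ.toRingHom
    ∃ b : Module.Basis (Fin r) (Polynomial ℂ ⧸ Ideal.span {(Polynomial.X : Polynomial ℂ) ^ 2})
        (MvPolynomial (Fin 2) ℂ ⧸ J),
      ∀ i : Fin r,
        b i = Ideal.Quotient.mk J ((X 1 : MvPolynomial (Fin 2) ℂ) ^ (i : ℕ)) := by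
  classical
  letI : Module Rdual (MvPolynomial (Fin 2) ℂ ⧸ J) := Module.compHom _ ψ.toRingHom
  have hsmul : ∀ (s : Rdual) (m : MvPolynomial (Fin 2) ℂ ⧸ J), s • m = ψ s * m :=
    fun _ _ => rfl
  set f := fpol r with hf
  set A := AdjoinRoot f with hA
  -- the forward algebra map α : M → AdjoinRoot f
  have hψeps : ψ eps = Ideal.Quotient.mk J (X 0) := hψ
  -- forward map
  set φ₀ : MvPolynomial (Fin 2) ℂ →ₐ[ℂ] A :=
    MvPolynomial.aeval ![AdjoinRoot.of f eps, AdjoinRoot.root f] with hφ₀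
  have hroot : (AdjoinRoot.root f - AdjoinRoot.of f eps) ^ r = 0 := by
    have h1 : (AdjoinRoot.root f - AdjoinRoot.of f eps) ^ r = AdjoinRoot.mk f f := by
      rw [hf, fpol]
      rw [map_pow, map_sub, AdjoinRoot.mk_X]
      rfl
    rw [h1, AdjoinRoot.mk_self]
  have hJker : ∀ a ∈ J, φ₀ a = 0 := by
    have hle : J ≤ RingHom.ker φ₀.toRingHom := by
      rw [hJdef, Ideal.span_le]
      intro p hp
      simp only [Set.mem_insert_iff, Set.mem_singleton_iff] at hp
      have e0 : φ₀ (X 0) = AdjoinRoot.of f eps := by simp [hφ₀]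
      have e1 : φ₀ (X 1) = AdjoinRoot.root f := by simp [hφ₀]
      rcases hp with rfl | rfl
      · show φ₀ _ = 0
        rw [map_pow, map_sub, e0, e1, ← neg_sub, neg_pow, hroot, mul_zero]
      · show φ₀ _ = 0
        rw [map_pow, e0, ← map_pow, eps_sq, map_zero]
    exact fun a ha => hle ha
  let α : (MvPolynomial (Fin 2) ℂ ⧸ J) →ₐ[ℂ] A := Ideal.Quotient.liftₐ J φ₀ hJker
  have hα0 : α (Ideal.Quotient.mk J (X 0)) = AdjoinRoot.of f eps := by
    show φ₀ (X 0) = _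
    simp [hφ₀]
  have hα1 : α (Ideal.Quotient.mk J (X 1)) = AdjoinRoot.root f := by
    show φ₀ (X 1) = _
    simp [hφ₀]
  set y1 := Ideal.Quotient.mk J (X 1) with hy1
  have hfy : Polynomial.eval₂ ψ.toRingHom y1 f = 0 := by
    rw [hf, fpol, Polynomial.eval₂_pow, Polynomial.eval₂_sub, Polynomial.eval₂_X,
      Polynomial.eval₂_C]
    show (y1 - ψ eps) ^ r = 0
    rw [hψeps, hy1, ← map_sub, ← map_pow, Ideal.Quotient.eq_zero_iff_mem]
    have hmem : ((X 0 : MvPolynomial (Fin 2) ℂ) - X 1) ^ r ∈ J := by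
      rw [hJdef]; exact Ideal.subset_span (Set.mem_insert _ _)
    have hneg : ((X 1 : MvPolynomial (Fin 2) ℂ) - X 0) ^ r
        = (-1) ^ r * ((X 0 : MvPolynomial (Fin 2) ℂ) - X 1) ^ r := by
      rw [← neg_sub, neg_pow]
    rw [hneg]
    exact Ideal.mul_mem_left _ _ hmem
  let β : A →+* (MvPolynomial (Fin 2) ℂ ⧸ J) := AdjoinRoot.lift ψ.toRingHom y1 hfy
  have hβof : ∀ s : Rdual, β (AdjoinRoot.of f s) = ψ s := fun s => AdjoinRoot.lift_of hfy
  have hβroot : β (AdjoinRoot.root f) = y1 := AdjoinRoot.lift_root hfy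
  -- compatibility of α with the Rdual-structures
  have hcomp : α.toRingHom.comp ψ.toRingHom = AdjoinRoot.of f := by
    apply Ideal.Quotient.ringHom_ext
    apply Polynomial.ringHom_ext'
    · ext c
      have h1 : (Ideal.Quotient.mk (Ideal.span {(Polynomial.X : Polynomial ℂ) ^ 2}))
          (Polynomial.C c) = algebraMap ℂ Rdual c := rfl
      simp only [RingHom.comp_apply, h1, AlgHom.toRingHom_eq_coe, RingHom.coe_coe]
      rw [ψ.commutes, α.commutes, AdjoinRoot.algebraMap_eq' ℂ]
      rfl
    · show α (ψ eps) = AdjoinRoot.of f eps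
      rw [hψeps, hα0]
  have hcompa : ∀ s : Rdual, α (ψ s) = AdjoinRoot.of f s := fun s => RingHom.congr_fun hcomp s
  -- α ∘ β = id
  have hαβcomp : (α.toRingHom.comp β).comp (AdjoinRoot.mk f) = AdjoinRoot.mk f := by
    apply Polynomial.ringHom_ext'
    · refine RingHom.ext fun s => ?_
      show α (β (AdjoinRoot.mk f (Polynomial.C s))) = AdjoinRoot.mk f (Polynomial.C s)
      rw [AdjoinRoot.mk_C, hβof, hcompa]
    · show α (β (AdjoinRoot.mk f Polynomial.X)) = AdjoinRoot.mk f Polynomial.X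
      rw [AdjoinRoot.mk_X, hβroot, hα1]
  have hαβ : ∀ x : A, α (β x) = x := by
    intro x
    induction x using AdjoinRoot.induction_on with
    | ih p => exact RingHom.congr_fun hαβcomp p
  -- β ∘ α = id
  have hβα : (β.comp α.toRingHom).comp (Ideal.Quotient.mk J) = Ideal.Quotient.mk J := by
    apply MvPolynomial.ringHom_ext
    · intro c
      show β (α (Ideal.Quotient.mk J (MvPolynomial.C c))) = Ideal.Quotient.mk J (MvPolynomial.C c)
      have h1 : (Ideal.Quotient.mk J) (MvPolynomial.C c)
          = algebraMap ℂ (MvPolynomial (Fin 2) ℂ ⧸ J) c := rfl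
      rw [h1, α.commutes, AdjoinRoot.algebraMap_eq' ℂ]
      show β (AdjoinRoot.of f (algebraMap ℂ Rdual c)) = _
      rw [hβof, ψ.commutes]
    · intro i
      fin_cases i
      · show β (α (Ideal.Quotient.mk J (X 0))) = Ideal.Quotient.mk J (X 0)
        rw [hα0, hβof, hψeps]
      · show β (α (Ideal.Quotient.mk J (X 1))) = Ideal.Quotient.mk J (X 1)
        rw [hα1, hβroot]
  have hβαa : ∀ m : MvPolynomial (Fin 2) ℂ ⧸ J, α (β (α m)) = α m := fun m => hαβ (α m)
  have hβα' : ∀ m : MvPolynomial (Fin 2) ℂ ⧸ J, β (α m) = m := by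
    intro m
    induction m using Quotient.inductionOn' with
    | h p =>
      have : (Quotient.mk'' p : MvPolynomial (Fin 2) ℂ ⧸ J) = Ideal.Quotient.mk J p := rfl
      rw [this]
      exact RingHom.congr_fun hβα p
  -- the Rdual-linear equivalence
  let e : A ≃ₗ[Rdual] (MvPolynomial (Fin 2) ℂ ⧸ J) :=
    { toFun := β
      map_add' := map_add β
      map_smul' := by
        intro s x
        show β (s • x) = s • β x
        induction x using AdjoinRoot.induction_on with
        | ih p =>
          rw [AdjoinRoot.smul_mk, Polynomial.smul_eq_C_mul, map_mul, map_mul,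
            AdjoinRoot.mk_C, hβof, hsmul]
      invFun := α
      left_inv := fun x => hαβ x
      right_inv := fun m => hβα' m }
  -- the power basis
  let pb := AdjoinRoot.powerBasis' (fpol_monic r)
  have hdim : pb.dim = r := fpol_natDegree r
  let b : Module.Basis (Fin r) Rdual (MvPolynomial (Fin 2) ℂ ⧸ J) :=
    (pb.basis.reindex (finCongr hdim)).map e
  refine ⟨b, fun i => ?_⟩
  have h1 : b i = e (pb.basis ((finCongr hdim).symm i)) := by
    rw [Module.Basis.map_apply, Module.Basis.reindex_apply]
  have h3 : ∀ z : A, e z = β z := fun _ => rfl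
  have h4 : pb.basis ((finCongr hdim).symm i) = AdjoinRoot.root f ^ (i : ℕ) := by
    rw [PowerBasis.coe_basis, AdjoinRoot.powerBasis'_gen]
    rfl
  rw [h1, h4, h3, map_pow, hβroot, hy1, ← map_pow]
end

section
/- Let r ≥ 1. The images of the 2r elements 1, y, …, y^(r−1), x, x·y, …, x·y^(r−1) in the quotient ring ℂ[x,y] ⧸ ((x−y)^r, x²) form a basis of this quotient as a ℂ-vector space; in particular its dimension over ℂ equals 2r. -/
open MvPolynomial

namespace Stmt16Aux

noncomputable section

def Iq (m : ℕ) : Ideal (MvPolynomial (Fin 2) ℂ) :=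
  Ideal.span {((X 0 : MvPolynomial (Fin 2) ℂ) - X 1) ^ (m + 1),
    (X 0 : MvPolynomial (Fin 2) ℂ) ^ 2}

abbrev Qr (m : ℕ) := MvPolynomial (Fin 2) ℂ ⧸ Iq m

def pa (m : ℕ) : Qr m := Ideal.Quotient.mk (Iq m) (X 0)
def pb (m : ℕ) : Qr m := Ideal.Quotient.mk (Iq m) (X 1)

lemma ha2 (m : ℕ) : pa m ^ 2 = 0 := by
  rw [pa, ← map_pow]
  exact Ideal.Quotient.eq_zero_iff_mem.mpr
    (Ideal.subset_span (Set.mem_insert_of_mem _ rfl))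

lemma hc (m : ℕ) : (pa m - pb m) ^ (m + 1) = 0 := by
  rw [pa, pb, ← map_sub, ← map_pow]
  exact Ideal.Quotient.eq_zero_iff_mem.mpr (Ideal.subset_span (Set.mem_insert _ _))

lemma hbr (m : ℕ) : pb m ^ (m + 1) = ((m + 1 : ℕ) : Qr m) * (pa m * pb m ^ m) := by
  have hc' : ((- pa m) + pb m) ^ (m + 1) = 0 := by
    have h : (- pa m) + pb m = -(pa m - pb m) := by ring
    have h3 : (-(pa m - pb m) : Qr m) = (-1) * (pa m - pb m) := by ring
    rw [h, h3, mul_pow, hc, mul_zero]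
  rw [add_pow, Finset.sum_range_succ', Finset.sum_range_succ'] at hc'
  have hz : ∀ i ∈ Finset.range m,
      (- pa m) ^ (i + 1 + 1) * pb m ^ (m + 1 - (i + 1 + 1)) *
        (((m + 1).choose (i + 1 + 1) : ℕ) : Qr m) = 0 := by
    intro i _
    have h4 : (- pa m) ^ (i + 1 + 1) = (- pa m) ^ i * pa m ^ 2 := by ring
    rw [h4, ha2, mul_zero, zero_mul, zero_mul]
  rw [Finset.sum_eq_zero hz] at hc'
  simp only [zero_add, pow_one, pow_zero, one_mul, Nat.choose_one_right,
    Nat.choose_zero_right, Nat.cast_one, mul_one, Nat.sub_zero,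
    Nat.add_sub_cancel] at hc'
  -- hc' : -pa m * pb m ^ m * ↑(m+1) + pb m ^ (m+1) = 0
  push_cast at hc' ⊢
  linear_combination hc'

def vfam (m : ℕ) : Fin (m + 1) ⊕ Fin (m + 1) → Qr m := fun j =>
  Ideal.Quotient.mk (Iq m)
    (Sum.elim (fun i : Fin (m + 1) => (X 1 : MvPolynomial (Fin 2) ℂ) ^ (i : ℕ))
      (fun i : Fin (m + 1) => (X 0 : MvPolynomial (Fin 2) ℂ) * X 1 ^ (i : ℕ)) j)

lemma vfam_inl (m : ℕ) (i : Fin (m + 1)) : vfam m (Sum.inl i) = pb m ^ (i : ℕ) := by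
  simp [vfam, pb, map_pow]

lemma vfam_inr (m : ℕ) (i : Fin (m + 1)) :
    vfam m (Sum.inr i) = pa m * pb m ^ (i : ℕ) := by
  simp [vfam, pa, pb, map_pow, map_mul]

lemma span_top (m : ℕ) : ⊤ ≤ Submodule.span ℂ (Set.range (vfam m)) := by
  set S := Submodule.span ℂ (Set.range (vfam m)) with hS
  have hb_mem : ∀ n : ℕ, n < m + 1 → pb m ^ n ∈ S := fun n hn =>
    Submodule.subset_span ⟨Sum.inl ⟨n, hn⟩, vfam_inl m ⟨n, hn⟩⟩
  have hab_mem : ∀ n : ℕ, n < m + 1 → pa m * pb m ^ n ∈ S := fun n hn =>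
    Submodule.subset_span ⟨Sum.inr ⟨n, hn⟩, vfam_inr m ⟨n, hn⟩⟩
  have hab : ∀ n : ℕ, pa m * pb m ^ n ∈ S := by
    intro n
    rcases lt_or_ge n (m + 1) with h | h
    · exact hab_mem n h
    · obtain ⟨k, rfl⟩ : ∃ k, n = (m + 1) + k := ⟨n - (m + 1), by omega⟩
      have h1 : pa m * pb m ^ ((m + 1) + k)
          = ((m + 1 : ℕ) : Qr m) * (pb m ^ m * pb m ^ k) * pa m ^ 2 := by
        rw [pow_add, hbr]; ring
      rw [h1, ha2, mul_zero]
      exact S.zero_mem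
  have hb_all : ∀ n : ℕ, pb m ^ n ∈ S := by
    intro n
    rcases lt_or_ge n (m + 1) with h | h
    · exact hb_mem n h
    · obtain ⟨k, rfl⟩ : ∃ k, n = (m + 1) + k := ⟨n - (m + 1), by omega⟩
      have h1 : pb m ^ ((m + 1) + k) = ((m + 1 : ℕ) : Qr m) * (pa m * pb m ^ (m + k)) := by
        rw [pow_add, hbr]; ring
      have h2 : ((m + 1 : ℕ) : ℂ) • (pa m * pb m ^ (m + k))
          = ((m + 1 : ℕ) : Qr m) * (pa m * pb m ^ (m + k)) := by
        rw [Nat.cast_smul_eq_nsmul, nsmul_eq_mul]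
      rw [h1, ← h2]
      exact S.smul_mem _ (hab (m + k))
  have hmul_a : ∀ q ∈ S, q * pa m ∈ S := by
    intro q hq
    induction hq using Submodule.span_induction with
    | mem x hx =>
      obtain ⟨j, rfl⟩ := hx
      rcases j with i | i
      · rw [vfam_inl]
        have h1 : pb m ^ (i : ℕ) * pa m = pa m * pb m ^ (i : ℕ) := mul_comm _ _
        rw [h1]; exact hab _
      · rw [vfam_inr]
        have h1 : (pa m * pb m ^ (i : ℕ)) * pa m = pb m ^ (i : ℕ) * pa m ^ 2 := by ring
        rw [h1, ha2, mul_zero]; exact S.zero_mem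
    | zero => rw [zero_mul]; exact S.zero_mem
    | add x y hx hy ihx ihy => rw [add_mul]; exact S.add_mem ihx ihy
    | smul c x hx ihx => rw [smul_mul_assoc]; exact S.smul_mem c ihx
  have hmul_b : ∀ q ∈ S, q * pb m ∈ S := by
    intro q hq
    induction hq using Submodule.span_induction with
    | mem x hx =>
      obtain ⟨j, rfl⟩ := hx
      rcases j with i | i
      · rw [vfam_inl, ← pow_succ]
        exact hb_all _
      · rw [vfam_inr]
        have h1 : (pa m * pb m ^ (i : ℕ)) * pb m = pa m * pb m ^ ((i : ℕ) + 1) := by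
          rw [pow_succ]; ring
        rw [h1]; exact hab _
    | zero => rw [zero_mul]; exact S.zero_mem
    | add x y hx hy ihx ihy => rw [add_mul]; exact S.add_mem ihx ihy
    | smul c x hx ihx => rw [smul_mul_assoc]; exact S.smul_mem c ihx
  intro q hq
  clear hq
  obtain ⟨p, rfl⟩ := Ideal.Quotient.mk_surjective q
  induction p using MvPolynomial.induction_on with
  | C c =>
    have h1 : Ideal.Quotient.mk (Iq m) (C c) = c • (pb m ^ 0) := by
      rw [pow_zero, ← map_one (Ideal.Quotient.mk (Iq m)),
        ← Ideal.Quotient.mkₐ_eq_mk ℂ (Iq m), ← map_smul, smul_eq_C_mul, mul_one]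
    rw [h1]; exact S.smul_mem c (hb_all 0)
  | add p q hp hq => rw [map_add]; exact S.add_mem hp hq
  | mul_X p n hp =>
    rw [map_mul]
    fin_cases n
    · exact hmul_a _ hp
    · exact hmul_b _ hp

abbrev Br (m : ℕ) := AdjoinRoot ((Polynomial.X : Polynomial ℂ) ^ (m + 1))

abbrev Tr (m : ℕ) := TrivSqZeroExt (Br m) (Br m)

def tB (m : ℕ) : Br m := AdjoinRoot.root _

lemma tB_pow (m : ℕ) : tB m ^ (m + 1) = 0 := by
  rw [tB, ← AdjoinRoot.mk_X, ← map_pow, AdjoinRoot.mk_self]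

lemma tB_indep (m : ℕ) : LinearIndependent ℂ (fun i : Fin (m + 1) => tB m ^ (i : ℕ)) := by
  have hX : ((Polynomial.X : Polynomial ℂ) ^ (m + 1)) ≠ 0 := pow_ne_zero _ Polynomial.X_ne_zero
  have h := (AdjoinRoot.powerBasis hX).basis.linearIndependent
  rw [PowerBasis.coe_basis] at h
  have hdim : (AdjoinRoot.powerBasis hX).dim = m + 1 := by
    simp [AdjoinRoot.powerBasis, Polynomial.natDegree_X_pow]
  have h2 := h.comp (Fin.cast hdim.symm) (Fin.cast_injective _)
  have h3 : ((fun i : Fin (AdjoinRoot.powerBasis hX).dim =>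
        (AdjoinRoot.powerBasis hX).gen ^ (i : ℕ)) ∘ Fin.cast hdim.symm)
      = fun i : Fin (m + 1) => tB m ^ (i : ℕ) := by
    funext i
    simp [AdjoinRoot.powerBasis_gen, tB]
  rwa [h3] at h2

def φ (m : ℕ) : MvPolynomial (Fin 2) ℂ →ₐ[ℂ] Tr m :=
  aeval ![(TrivSqZeroExt.inr 1 : Tr m), TrivSqZeroExt.inl (tB m) + TrivSqZeroExt.inr 1]

lemma φ_X0 (m : ℕ) : φ m (X 0) = TrivSqZeroExt.inr 1 := by simp [φ]

lemma φ_X1 (m : ℕ) : φ m (X 1) = TrivSqZeroExt.inl (tB m) + TrivSqZeroExt.inr 1 := by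
  simp [φ]

lemma φ_ker (m : ℕ) : ∀ p ∈ Iq m, φ m p = 0 := by
  have hle : Iq m ≤ RingHom.ker (φ m).toRingHom := by
    rw [Iq, Ideal.span_le]
    rintro p hp
    simp only [Set.mem_insert_iff, Set.mem_singleton_iff] at hp
    rcases hp with rfl | rfl
    · have h1 : (φ m) ((X 0 - X 1) ^ (m + 1)) = (φ m (X 0) - φ m (X 1)) ^ (m + 1) := by
        rw [map_pow, map_sub]
      have h2 : φ m (X 0) - φ m (X 1) = (-1) * TrivSqZeroExt.inl (tB m) := by
        rw [φ_X0, φ_X1]; ring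
      simp only [SetLike.mem_coe, RingHom.mem_ker, AlgHom.toRingHom_eq_coe,
        RingHom.coe_coe]
      rw [h1, h2, mul_pow, TrivSqZeroExt.inl_pow, tB_pow, TrivSqZeroExt.inl_zero, mul_zero]
    · simp only [SetLike.mem_coe, RingHom.mem_ker, AlgHom.toRingHom_eq_coe,
        RingHom.coe_coe]
      rw [map_pow, φ_X0, sq, TrivSqZeroExt.inr_mul_inr]
  intro p hp
  exact hle hp

def φ' (m : ℕ) : Qr m →ₐ[ℂ] Tr m := Ideal.Quotient.liftₐ (Iq m) (φ m) (φ_ker m)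

def Ffst (m : ℕ) : Tr m →ₗ[ℂ] Br m where
  toFun := TrivSqZeroExt.fst
  map_add' := TrivSqZeroExt.fst_add
  map_smul' := TrivSqZeroExt.fst_smul

def Fsnd (m : ℕ) : Tr m →ₗ[ℂ] Br m where
  toFun := TrivSqZeroExt.snd
  map_add' := TrivSqZeroExt.snd_add
  map_smul' := TrivSqZeroExt.snd_smul

lemma indep (m : ℕ) : LinearIndependent ℂ (vfam m) := by
  apply LinearIndependent.of_comp (φ' m).toLinearMap
  have hw : ((φ' m).toLinearMap ∘ vfam m) = Sum.elim
      (fun i : Fin (m + 1) => (TrivSqZeroExt.inl (tB m) + TrivSqZeroExt.inr 1) ^ (i : ℕ))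
      (fun i : Fin (m + 1) => (TrivSqZeroExt.inr (tB m ^ (i : ℕ)) : Tr m)) := by
    funext j
    rcases j with i | i
    · have h1 : vfam m (Sum.inl i) = Ideal.Quotient.mk (Iq m) (X 1 ^ (i : ℕ)) := rfl
      simp only [Function.comp_apply, h1, AlgHom.toLinearMap_apply, Sum.elim_inl]
      rw [φ', Ideal.Quotient.liftₐ_apply]
      erw [Ideal.Quotient.lift_mk]
      rw [map_pow]
      simp only [AlgHom.toRingHom_eq_coe, RingHom.coe_coe]
      rw [φ_X1]
    · have h1 : vfam m (Sum.inr i) = Ideal.Quotient.mk (Iq m) (X 0 * X 1 ^ (i : ℕ)) := rfl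
      simp only [Function.comp_apply, h1, AlgHom.toLinearMap_apply, Sum.elim_inr]
      rw [φ', Ideal.Quotient.liftₐ_apply]
      erw [Ideal.Quotient.lift_mk]
      rw [map_mul, map_pow]
      simp only [AlgHom.toRingHom_eq_coe, RingHom.coe_coe]
      rw [φ_X0, φ_X1]
      ext
      · simp [TrivSqZeroExt.fst_mul]
      · simp [TrivSqZeroExt.snd_mul]
  rw [hw]
  rw [Fintype.linearIndependent_iff]
  intro c hc
  have hfst := congrArg (Ffst m) hc
  rw [map_sum, map_zero] at hfst
  rw [Fintype.sum_sum_type] at hfst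
  simp only [map_smul] at hfst
  have hfst1 : ∀ i : Fin (m + 1), Ffst m (Sum.elim
      (fun i : Fin (m + 1) => (TrivSqZeroExt.inl (tB m) + TrivSqZeroExt.inr 1) ^ (i : ℕ))
      (fun i : Fin (m + 1) => (TrivSqZeroExt.inr (tB m ^ (i : ℕ)) : Tr m)) (Sum.inl i))
      = tB m ^ (i : ℕ) := by
    intro i
    simp [Ffst, TrivSqZeroExt.fst_pow]
  have hfst2 : ∀ i : Fin (m + 1), Ffst m (Sum.elim
      (fun i : Fin (m + 1) => (TrivSqZeroExt.inl (tB m) + TrivSqZeroExt.inr 1) ^ (i : ℕ))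
      (fun i : Fin (m + 1) => (TrivSqZeroExt.inr (tB m ^ (i : ℕ)) : Tr m)) (Sum.inr i))
      = 0 := by
    intro i
    simp [Ffst]
  simp only [hfst1, hfst2, smul_zero, Finset.sum_const_zero, add_zero] at hfst
  have hcl : ∀ i : Fin (m + 1), c (Sum.inl i) = 0 := by
    have := Fintype.linearIndependent_iff.mp (tB_indep m) (fun i => c (Sum.inl i)) hfst
    exact this
  have hsnd := congrArg (Fsnd m) hc
  rw [map_sum, map_zero] at hsnd
  rw [Fintype.sum_sum_type] at hsnd
  simp only [map_smul, hcl, zero_smul, map_zero, smul_zero, Finset.sum_const_zero,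
    zero_add] at hsnd
  have hsnd2 : ∀ i : Fin (m + 1), Fsnd m (Sum.elim
      (fun i : Fin (m + 1) => (TrivSqZeroExt.inl (tB m) + TrivSqZeroExt.inr 1) ^ (i : ℕ))
      (fun i : Fin (m + 1) => (TrivSqZeroExt.inr (tB m ^ (i : ℕ)) : Tr m)) (Sum.inr i))
      = tB m ^ (i : ℕ) := by
    intro i
    simp [Fsnd]
  simp only [hsnd2] at hsnd
  have hcr : ∀ i : Fin (m + 1), c (Sum.inr i) = 0 :=
    Fintype.linearIndependent_iff.mp (tB_indep m) (fun i => c (Sum.inr i)) hsnd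
  intro j
  rcases j with i | i
  · exact hcl i
  · exact hcr i

end

end Stmt16Aux

/-- Step (a) of Proposition 2.1: the images of `1, y, …, y^(r−1), x, x·y, …, x·y^(r−1)`
form a `ℂ`-basis of `M₂ = ℂ[x,y]/((x−y)^r, x²)`; in particular `dim_ℂ M₂ = 2r`. -/
theorem stmt_16 (r : ℕ) (hr : 1 ≤ r) :
    (∃ b : Module.Basis (Fin r ⊕ Fin r) ℂ
        (MvPolynomial (Fin 2) ℂ ⧸
          Ideal.span {((X 0 : MvPolynomial (Fin 2) ℂ) - X 1) ^ r,
            (X 0 : MvPolynomial (Fin 2) ℂ) ^ 2}),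
      ∀ j : Fin r ⊕ Fin r,
        b j = Ideal.Quotient.mk
          (Ideal.span {((X 0 : MvPolynomial (Fin 2) ℂ) - X 1) ^ r,
            (X 0 : MvPolynomial (Fin 2) ℂ) ^ 2})
          (Sum.elim
            (fun i : Fin r => (X 1 : MvPolynomial (Fin 2) ℂ) ^ (i : ℕ))
            (fun i : Fin r => (X 0 : MvPolynomial (Fin 2) ℂ) * X 1 ^ (i : ℕ)) j)) ∧
    Module.finrank ℂ
      (MvPolynomial (Fin 2) ℂ ⧸
        Ideal.span {((X 0 : MvPolynomial (Fin 2) ℂ) - X 1) ^ r,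
          (X 0 : MvPolynomial (Fin 2) ℂ) ^ 2}) = 2 * r := by
  obtain ⟨m, rfl⟩ : ∃ m, r = m + 1 := ⟨r - 1, (Nat.succ_pred_eq_of_pos hr).symm⟩
  have hcard :=
    Module.finrank_eq_card_basis (Module.Basis.mk (Stmt16Aux.indep m) (Stmt16Aux.span_top m))
  simp only [Fintype.card_sum, Fintype.card_fin] at hcard
  exact ⟨⟨Module.Basis.mk (Stmt16Aux.indep m) (Stmt16Aux.span_top m),
    fun j => Module.Basis.mk_apply (Stmt16Aux.indep m) (Stmt16Aux.span_top m) j⟩,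
    hcard.trans (by omega)⟩
end
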